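/- Let E ⊂ ℝ be a compact set with Lebesgue measure m(E), and let h(z) = (1/2)∫_E dt/(z - t) and f(z) = (e^{h(z)} - 1)/(e^{h(z)} + 1) for z outside E. Then lim_{z→∞} z·f(z) = m(E)/4, i.e., f'(∞) = m(E)/4. -/

import Mathlib

open MeasureTheory Filter Bornology

lemma pommerenke_aux (E : Set ℝ) (hE : IsCompact E) (R : ℝ) (hR0 : 0 ≤ R)
    (hER : ∀ t ∈ E, |t| ≤ R) :
    Tendsto (fun z : ℂ => z * ∫ t in E, (z - (t : ℂ))⁻¹) (cobounded ℂ)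
      (nhds (((volume E).toReal : ℝ) : ℂ)) := by
  set M := (volume E).toReal with hM
  rw [← tendsto_sub_nhds_zero_iff]
  apply squeeze_zero_norm' (a := fun z : ℂ => (R * (‖z‖ - R)⁻¹) * M)
  · filter_upwards [tendsto_norm_cobounded_atTop.eventually_ge_atTop (R + 1)] with z hz
    have hz1 : ∀ t ∈ E, (1 : ℝ) ≤ ‖z - (t : ℂ)‖ := by
      intro t ht
      have htR : ‖(t : ℂ)‖ ≤ R := by
        rw [Complex.norm_real, Real.norm_eq_abs]; exact hER t ht
      calc (1 : ℝ) ≤ ‖z‖ - ‖(t : ℂ)‖ := by linarith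
        _ ≤ ‖z - (t : ℂ)‖ := norm_sub_norm_le _ _
    have hne : ∀ t ∈ E, z - (t : ℂ) ≠ 0 := by
      intro t ht h0
      have := hz1 t ht; rw [h0, norm_zero] at this; linarith
    have hc1 : ContinuousOn (fun t : ℝ => (z - (t : ℂ))⁻¹) E :=
      ((continuous_const.sub Complex.continuous_ofReal).continuousOn).inv₀ hne
    have hi1 : IntegrableOn (fun t : ℝ => (z - (t : ℂ))⁻¹) E volume :=
      hc1.integrableOn_compact hE
    have key : z * (∫ t in E, (z - (t : ℂ))⁻¹) - (M : ℂ)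
        = ∫ t in E, (t : ℂ) * (z - (t : ℂ))⁻¹ := by
      have h1 : z * ∫ t in E, (z - (t : ℂ))⁻¹ = ∫ t in E, z * (z - (t : ℂ))⁻¹ :=
        (integral_const_mul z _).symm
      have h2 : (M : ℂ) = ∫ _t in E, (1 : ℂ) := by
        simp [hM, Complex.real_smul, measureReal_def]
      rw [h1, h2, ← integral_sub (hi1.const_mul z)
        (integrableOn_const hE.measure_lt_top.ne)]
      apply setIntegral_congr_fun hE.measurableSet
      intro t ht
      have := hne t ht
      field_simp
      ring
    rw [key]
    have hMlt : volume E < ⊤ := hE.measure_lt_top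
    refine norm_setIntegral_le_of_norm_le_const hMlt ?_
    intro t ht
    have htR : ‖(t : ℂ)‖ ≤ R := by
      rw [Complex.norm_real, Real.norm_eq_abs]; exact hER t ht
    have hzt : ‖z‖ - R ≤ ‖z - (t : ℂ)‖ := by
      have := norm_sub_norm_le z (t : ℂ); linarith
    have hpos : (0 : ℝ) < ‖z‖ - R := by linarith
    rw [norm_mul, norm_inv]
    apply mul_le_mul htR _ (by positivity) hR0
    exact inv_anti₀ hpos hzt
  · have h1 : Tendsto (fun z : ℂ => ‖z‖ - R) (cobounded ℂ) atTop :=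
      tendsto_atTop_add_const_right _ (-R) tendsto_norm_cobounded_atTop
    have h2 : Tendsto (fun z : ℂ => (R * (‖z‖ - R)⁻¹) * M) (cobounded ℂ)
        (nhds ((R * 0) * M)) :=
      ((h1.inv_tendsto_atTop.const_mul R).mul_const M)
    simpa using h2

theorem pommerenke_deriv_at_infty (E : Set ℝ) (hE : IsCompact E)
    (h f : ℂ → ℂ)
    (hh : ∀ z, h z = (1 / 2 : ℂ) * ∫ t in E, (z - (t : ℂ))⁻¹)
    (hf : ∀ z, f z = (Complex.exp (h z) - 1) / (Complex.exp (h z) + 1)) :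
    Tendsto (fun z => z * f z) (cobounded ℂ)
      (nhds (((volume E).toReal / 4 : ℝ) : ℂ)) := by
  obtain ⟨R, hR0, hER⟩ : ∃ R : ℝ, 0 ≤ R ∧ ∀ t ∈ E, |t| ≤ R := by
    obtain ⟨r, hr⟩ := hE.isBounded.subset_closedBall 0
    refine ⟨max r 0, le_max_right _ _, fun t ht => ?_⟩
    have := hr ht
    rw [Metric.mem_closedBall, Real.dist_eq, sub_zero] at this
    exact this.trans (le_max_left _ _)
  set M := (volume E).toReal with hM
  have step0 := pommerenke_aux E hE R hR0 hER
  have step1 : Tendsto (fun z : ℂ => z * h z) (cobounded ℂ) (nhds ((1/2 : ℂ) * M)) := by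
    have := step0.const_mul (1/2 : ℂ)
    refine this.congr fun z => ?_
    rw [hh z]; ring
  have hzero : Tendsto h (cobounded ℂ) (nhds 0) := by
    have h1 : Tendsto (fun z : ℂ => z⁻¹ * (z * h z)) (cobounded ℂ)
        (nhds (0 * ((1/2 : ℂ) * M))) := tendsto_inv₀_cobounded.mul step1
    rw [zero_mul] at h1
    refine h1.congr' ?_
    filter_upwards [eventually_ne_cobounded (0 : ℂ)] with z hz
    field_simp
  have sq : Tendsto (fun z : ℂ => z * (Complex.exp (h z) - 1 - h z)) (cobounded ℂ)
      (nhds 0) := by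
    apply squeeze_zero_norm' (a := fun z : ℂ => ‖z * h z‖ * ‖h z‖)
    · filter_upwards [hzero.eventually (Metric.ball_mem_nhds (0:ℂ) one_pos)] with z hz
      rw [dist_zero_right] at hz
      have hb : ‖Complex.exp (h z) - 1 - h z‖ ≤ ‖h z‖ ^ 2 :=
        Complex.norm_exp_sub_one_sub_id_le (le_of_lt hz)
      calc ‖z * (Complex.exp (h z) - 1 - h z)‖
          = ‖z‖ * ‖Complex.exp (h z) - 1 - h z‖ := norm_mul _ _
        _ ≤ ‖z‖ * (‖h z‖ ^ 2) := by
            apply mul_le_mul_of_nonneg_left _ (norm_nonneg z)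
            exact hb
        _ = ‖z * h z‖ * ‖h z‖ := by rw [norm_mul]; ring
    · have := (step1.norm.mul hzero.norm)
      simpa using this
  have hnum : Tendsto (fun z : ℂ => z * (Complex.exp (h z) - 1)) (cobounded ℂ)
      (nhds ((1/2 : ℂ) * M)) := by
    have := step1.add sq
    rw [add_zero] at this
    refine this.congr fun z => ?_
    ring
  have hden : Tendsto (fun z : ℂ => Complex.exp (h z) + 1) (cobounded ℂ) (nhds 2) := by
    have h1 : Tendsto (fun z : ℂ => Complex.exp (h z)) (cobounded ℂ) (nhds 1) := by
      have := (Complex.continuous_exp.tendsto 0).comp hzero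
      simpa [Function.comp_def] using this
    have := h1.add (tendsto_const_nhds : Tendsto (fun _ : ℂ => (1:ℂ)) (cobounded ℂ) (nhds 1))
    norm_num at this
    exact this
  have final := hnum.div hden (two_ne_zero)
  have : ((M / 4 : ℝ) : ℂ) = ((1/2 : ℂ) * M) / 2 := by push_cast; ring
  rw [this]
  refine final.congr fun z => ?_
  simp only [Pi.div_apply]
  rw [hf z, mul_div_assoc]
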